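/- With D as in the EKR (1.2.1) normal form spanned by Z₁ = x₃∂_t + x₂x₃∂_{x₁} + y₂x₃∂_{y₁} + ∂_{x₂} + y₃∂_{y₂} + (b+x₄)∂_{x₃} + (c+y₄)∂_{y₃}, Z₂ = ∂_{x₄}, Z₃ = ∂_{y₄} on ℝ⁹, and (b,c) ≠ (0,0), the small growth vector of D at the origin is [3, 5, 7, 8, 9]. -/

import Mathlib

/-- ℝ⁹ with coordinates t, x₁, y₁, x₂, y₂, x₃, y₃, x₄, y₄ (indices 0,…,8). -/
abbrev E9 := Fin 9 → ℝ

/-- Lie bracket of vector fields on ℝ⁹: `[X,Y](v) = DY(v)(X(v)) - DX(v)(Y(v))`. -/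
noncomputable def lieB (X Y : E9 → E9) : E9 → E9 :=
  fun v => fderiv ℝ Y v (X v) - fderiv ℝ X v (Y v)

/-- The EKR (1.2.1) generator
`Z₁ = x₃∂_t + x₂x₃∂_{x₁} + y₂x₃∂_{y₁} + ∂_{x₂} + y₃∂_{y₂} + (b+x₄)∂_{x₃} + (c+y₄)∂_{y₃}`. -/
noncomputable def Zone (b c : ℝ) : E9 → E9 := fun v =>
  ![v 5, v 3 * v 5, v 4 * v 5, 1, v 6, b + v 7, c + v 8, 0, 0]

/-- The generators of the distribution D: Z₁, Z₂ = ∂_{x₄}, Z₃ = ∂_{y₄}. -/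
noncomputable def gens (b c : ℝ) : Set (E9 → E9) :=
  {Zone b c, fun _ => Pi.single 7 1, fun _ => Pi.single 8 1}

/-- Generating vector fields of the small flag: `SmallSet b c k` generates
`V_{k+1}`, where V₁ = D and V_{i+1} = V_i + [D, V_i]. -/
noncomputable def SmallSet (b c : ℝ) : ℕ → Set (E9 → E9)
  | 0 => gens b c
  | k + 1 => SmallSet b c k ∪
      {W | ∃ X ∈ gens b c, ∃ Y ∈ SmallSet b c k, W = lieB X Y}

/-- The fiber at 0 of the member `V_{k+1}` of the small flag. -/
noncomputable def smallFiber (b c : ℝ) (k : ℕ) : Submodule ℝ E9 :=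
  Submodule.span ℝ ((fun W : E9 → E9 => W 0) '' SmallSet b c k)

namespace EKR121

open Matrix

@[simp] lemma cons_val_five {α : Type*} {m : ℕ} (x : α)
    (u : Fin m.succ.succ.succ.succ.succ → α) :
    vecCons x u 5 = vecHead (vecTail (vecTail (vecTail (vecTail u)))) := rfl
@[simp] lemma cons_val_six {α : Type*} {m : ℕ} (x : α)
    (u : Fin m.succ.succ.succ.succ.succ.succ → α) :
    vecCons x u 6 = vecHead (vecTail (vecTail (vecTail (vecTail (vecTail u))))) := rfl
@[simp] lemma cons_val_seven {α : Type*} {m : ℕ} (x : α)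
    (u : Fin m.succ.succ.succ.succ.succ.succ.succ → α) :
    vecCons x u 7 =
      vecHead (vecTail (vecTail (vecTail (vecTail (vecTail (vecTail u)))))) := rfl
@[simp] lemma cons_val_eight {α : Type*} {m : ℕ} (x : α)
    (u : Fin m.succ.succ.succ.succ.succ.succ.succ.succ → α) :
    vecCons x u 8 =
      vecHead (vecTail (vecTail (vecTail (vecTail (vecTail (vecTail (vecTail u))))))) := rfl

noncomputable def prj (i : Fin 9) : E9 →L[ℝ] ℝ := ContinuousLinearMap.proj i

noncomputable def DZ (v : E9) : E9 →L[ℝ] E9 :=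
  ContinuousLinearMap.pi
    ![prj 5, v 3 • prj 5 + v 5 • prj 3, v 4 • prj 5 + v 5 • prj 4, 0, prj 6, prj 7, prj 8, 0, 0]

noncomputable def VA : E9 → E9 := fun v => ![1, v 3, v 4, 0, 0, 0, 0, 0, 0]
noncomputable def VC : E9 → E9 := fun v => ![0, 1, v 6, 0, 0, 0, 0, 0, 0]
noncomputable def VF : E9 → E9 := fun v => ![0, 0, -v 5, 0, 0, 0, 0, 0, 0]
noncomputable def nVA : E9 → E9 := fun v => -VA v
noncomputable def nVC : E9 → E9 := fun v => -VC v
noncomputable def nVF : E9 → E9 := fun v => -VF v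

noncomputable def DA : E9 →L[ℝ] E9 :=
  ContinuousLinearMap.pi ![0, prj 3, prj 4, 0, 0, 0, 0, 0, 0]
noncomputable def DC : E9 →L[ℝ] E9 :=
  ContinuousLinearMap.pi ![0, 0, prj 6, 0, 0, 0, 0, 0, 0]
noncomputable def DF : E9 →L[ℝ] E9 :=
  ContinuousLinearMap.pi ![0, 0, -prj 5, 0, 0, 0, 0, 0, 0]

lemma hasFDerivAt_Zone (b c : ℝ) (v : E9) : HasFDerivAt (Zone b c) (DZ v) v := by
  apply hasFDerivAt_pi.2
  intro i
  fin_cases i <;>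
    simp only [Zone, Matrix.cons_val_zero, Matrix.cons_val_one, Matrix.head_cons,
      Matrix.cons_val_succ, DZ]
  · exact hasFDerivAt_apply 5 v
  · exact (hasFDerivAt_apply 3 v).mul (hasFDerivAt_apply 5 v)
  · exact (hasFDerivAt_apply 4 v).mul (hasFDerivAt_apply 5 v)
  · exact hasFDerivAt_const 1 v
  · exact hasFDerivAt_apply 6 v
  · exact (hasFDerivAt_apply 7 v).const_add b
  · exact (hasFDerivAt_apply 8 v).const_add c
  · exact hasFDerivAt_const 0 v
  · exact hasFDerivAt_const 0 v

lemma hasFDerivAt_VA (v : E9) : HasFDerivAt VA DA v := by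
  apply hasFDerivAt_pi.2
  intro i
  fin_cases i <;>
    simp only [VA, Matrix.cons_val_zero, Matrix.cons_val_one, Matrix.head_cons,
      Matrix.cons_val_succ, DA]
  · exact hasFDerivAt_const 1 v
  · exact hasFDerivAt_apply 3 v
  · exact hasFDerivAt_apply 4 v
  all_goals exact hasFDerivAt_const 0 v

lemma hasFDerivAt_VC (v : E9) : HasFDerivAt VC DC v := by
  apply hasFDerivAt_pi.2
  intro i
  fin_cases i <;>
    simp only [VC, Matrix.cons_val_zero, Matrix.cons_val_one, Matrix.head_cons,
      Matrix.cons_val_succ, DC]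
  · exact hasFDerivAt_const 0 v
  · exact hasFDerivAt_const 1 v
  · exact hasFDerivAt_apply 6 v
  all_goals exact hasFDerivAt_const 0 v

lemma hasFDerivAt_VF (v : E9) : HasFDerivAt VF DF v := by
  apply hasFDerivAt_pi.2
  intro i
  fin_cases i <;>
    simp only [VF, Matrix.cons_val_zero, Matrix.cons_val_one, Matrix.head_cons,
      Matrix.cons_val_succ, DF]
  · exact hasFDerivAt_const 0 v
  · exact hasFDerivAt_const 0 v
  · exact (hasFDerivAt_apply 5 v).neg
  all_goals exact hasFDerivAt_const 0 v

lemma fderiv_Zone (b c : ℝ) (v : E9) : fderiv ℝ (Zone b c) v = DZ v :=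
  (hasFDerivAt_Zone b c v).fderiv
lemma fderiv_VA (v : E9) : fderiv ℝ VA v = DA := (hasFDerivAt_VA v).fderiv
lemma fderiv_VC (v : E9) : fderiv ℝ VC v = DC := (hasFDerivAt_VC v).fderiv
lemma fderiv_VF (v : E9) : fderiv ℝ VF v = DF := (hasFDerivAt_VF v).fderiv

lemma lieB_const_right (X : E9 → E9) (w : E9) :
    lieB X (fun _ => w) = fun v => -(fderiv ℝ X v w) := by
  funext v; simp [lieB]

lemma lieB_const_left (w : E9) (Y : E9 → E9) :
    lieB (fun _ => w) Y = fun v => fderiv ℝ Y v w := by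
  funext v; simp [lieB]

lemma lieB_const_const (w w' : E9) :
    lieB (fun _ => w) (fun _ => w') = fun _ => (0 : E9) := by
  funext v; simp [lieB]

lemma lieB_self (X : E9 → E9) : lieB X X = fun _ => (0 : E9) := by
  funext v; simp [lieB]

lemma lieB_neg_right (X Y : E9 → E9) :
    lieB X (fun v => -(Y v)) = fun v => -(lieB X Y v) := by
  funext v
  simp only [lieB, fderiv_fun_neg, ContinuousLinearMap.neg_apply, map_neg]
  abel

variable (b c : ℝ)

-- bracket computations
lemma L0 : lieB (Zone b c) (fun _ => (0 : E9)) = fun _ => (0 : E9) := by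
  rw [lieB_const_right]
  funext v
  simp [fderiv_Zone]

lemma L1 : lieB (Zone b c) (fun _ => Pi.single 7 1) = fun _ => -Pi.single 5 1 := by
  rw [lieB_const_right]
  funext v
  simp only [fderiv_Zone]
  ext i
  fin_cases i <;> simp [DZ, prj, Pi.single_apply, ContinuousLinearMap.pi_apply]

lemma L2 : lieB (Zone b c) (fun _ => Pi.single 8 1) = fun _ => -Pi.single 6 1 := by
  rw [lieB_const_right]
  funext v
  simp only [fderiv_Zone]
  ext i
  fin_cases i <;> simp [DZ, prj, Pi.single_apply, ContinuousLinearMap.pi_apply]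

lemma L3 : lieB (fun _ => Pi.single 7 1) (Zone b c) = fun _ => Pi.single 5 1 := by
  rw [lieB_const_left]
  funext v
  simp only [fderiv_Zone]
  ext i
  fin_cases i <;> simp [DZ, prj, Pi.single_apply, ContinuousLinearMap.pi_apply]

lemma L4 : lieB (fun _ => Pi.single 8 1) (Zone b c) = fun _ => Pi.single 6 1 := by
  rw [lieB_const_left]
  funext v
  simp only [fderiv_Zone]
  ext i
  fin_cases i <;> simp [DZ, prj, Pi.single_apply, ContinuousLinearMap.pi_apply]

lemma L5 : lieB (Zone b c) (fun _ => Pi.single 5 1) = nVA := by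
  rw [lieB_const_right]
  funext v
  simp only [fderiv_Zone, nVA]
  ext i
  fin_cases i <;> simp [DZ, VA, prj, Pi.single_apply, ContinuousLinearMap.pi_apply]

lemma L6 : lieB (Zone b c) (fun _ => -Pi.single 5 1) = VA := by
  rw [lieB_const_right]
  funext v
  simp only [fderiv_Zone]
  ext i
  fin_cases i <;> simp [DZ, VA, prj, Pi.single_apply, ContinuousLinearMap.pi_apply]

lemma L7 : lieB (Zone b c) (fun _ => Pi.single 6 1) = fun _ => -Pi.single 4 1 := by
  rw [lieB_const_right]
  funext v
  simp only [fderiv_Zone]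
  ext i
  fin_cases i <;> simp [DZ, prj, Pi.single_apply, ContinuousLinearMap.pi_apply]

lemma L8 : lieB (Zone b c) (fun _ => -Pi.single 6 1) = fun _ => Pi.single 4 1 := by
  rw [lieB_const_right]
  funext v
  simp only [fderiv_Zone]
  ext i
  fin_cases i <;> simp [DZ, prj, Pi.single_apply, ContinuousLinearMap.pi_apply]

lemma L9 : lieB (Zone b c) VA = VC := by
  funext v
  simp only [lieB, fderiv_Zone, fderiv_VA]
  ext i
  fin_cases i <;>
    simp [DZ, DA, VA, VC, Zone, prj, Pi.single_apply, ContinuousLinearMap.pi_apply]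

lemma L10 : lieB (Zone b c) nVA = nVC := by
  have h : nVA = fun v => -(VA v) := rfl
  rw [h, lieB_neg_right, L9]
  rfl

lemma L11 : lieB (fun _ => Pi.single 7 1) VA = fun _ => (0 : E9) := by
  rw [lieB_const_left]
  funext v
  simp only [fderiv_VA]
  ext i
  fin_cases i <;> simp [DA, prj, Pi.single_apply, ContinuousLinearMap.pi_apply]

lemma L12 : lieB (fun _ => Pi.single 8 1) VA = fun _ => (0 : E9) := by
  rw [lieB_const_left]
  funext v
  simp only [fderiv_VA]
  ext i
  fin_cases i <;> simp [DA, prj, Pi.single_apply, ContinuousLinearMap.pi_apply]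

lemma L11n : lieB (fun _ => Pi.single 7 1) nVA = fun _ => (0 : E9) := by
  have h : nVA = fun v => -(VA v) := rfl
  rw [h, lieB_neg_right]
  simp only [L11, neg_zero]

lemma L12n : lieB (fun _ => Pi.single 8 1) nVA = fun _ => (0 : E9) := by
  have h : nVA = fun v => -(VA v) := rfl
  rw [h, lieB_neg_right]
  simp only [L12, neg_zero]

lemma L13 : lieB (Zone b c) (fun _ => Pi.single 4 1) = VF := by
  rw [lieB_const_right]
  funext v
  simp only [fderiv_Zone]
  ext i
  fin_cases i <;> simp [DZ, VF, prj, Pi.single_apply, ContinuousLinearMap.pi_apply]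

lemma L14 : lieB (Zone b c) (fun _ => -Pi.single 4 1) = nVF := by
  rw [lieB_const_right]
  funext v
  simp only [fderiv_Zone, nVF]
  ext i
  fin_cases i <;> simp [DZ, VF, prj, Pi.single_apply, ContinuousLinearMap.pi_apply]

lemma G0 : (lieB (Zone b c) VC) 0 = c • (Pi.single 2 1 : E9) := by
  simp only [lieB, fderiv_Zone, fderiv_VC]
  ext i
  fin_cases i <;>
    simp [DZ, DC, VC, Zone, prj, Pi.single_apply, ContinuousLinearMap.pi_apply]

lemma H0 : (lieB (Zone b c) VF) 0 = (-b) • (Pi.single 2 1 : E9) := by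
  simp only [lieB, fderiv_Zone, fderiv_VF]
  ext i
  fin_cases i <;>
    simp [DZ, DF, VF, Zone, prj, Pi.single_apply, ContinuousLinearMap.pi_apply]

-- values at 0
lemma Zone_zero : Zone b c 0 = (Pi.single 3 1 : E9) + b • (Pi.single 5 1 : E9) + c • (Pi.single 6 1 : E9) := by
  ext i
  fin_cases i <;> simp [Zone, Pi.single_apply]

lemma VA_zero : VA 0 = Pi.single 0 1 := by
  ext i
  fin_cases i <;> simp [VA, Pi.single_apply]

lemma VC_zero : VC 0 = Pi.single 1 1 := by
  ext i
  fin_cases i <;> simp [VC, Pi.single_apply]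

lemma VF_zero : VF 0 = 0 := by
  ext i
  fin_cases i <;> simp [VF, Pi.single_apply]

end EKR121

namespace EKR121

variable (b c : ℝ)

noncomputable def T1 : Set (E9 → E9) :=
  {Zone b c, fun _ => Pi.single 7 1, fun _ => Pi.single 8 1, fun _ => (0 : E9),
   fun _ => Pi.single 5 1, fun _ => -Pi.single 5 1,
   fun _ => Pi.single 6 1, fun _ => -Pi.single 6 1}

noncomputable def T2 : Set (E9 → E9) :=
  T1 b c ∪ {VA, nVA, fun _ => Pi.single 4 1, fun _ => -Pi.single 4 1}

noncomputable def T3 : Set (E9 → E9) :=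
  T2 b c ∪ {VC, nVC, VF, nVF}

lemma cl0 : ∀ X ∈ gens b c, ∀ Y ∈ gens b c, lieB X Y ∈ T1 b c := by
  intro X hX Y hY
  simp only [gens, Set.mem_insert_iff, Set.mem_singleton_iff] at hX hY
  rcases hX with rfl | rfl | rfl <;> rcases hY with rfl | rfl | rfl <;>
    simp only [lieB_self, lieB_const_const, L1, L2, L3, L4] <;>
    simp [T1]

set_option maxHeartbeats 1000000 in
lemma cl1 : ∀ X ∈ gens b c, ∀ Y ∈ T1 b c, lieB X Y ∈ T2 b c := by
  intro X hX Y hY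
  simp only [gens, Set.mem_insert_iff, Set.mem_singleton_iff] at hX
  simp only [T1, Set.mem_insert_iff, Set.mem_singleton_iff] at hY
  rcases hX with rfl | rfl | rfl <;>
    rcases hY with rfl | rfl | rfl | rfl | rfl | rfl | rfl | rfl <;>
    simp only [lieB_self, lieB_const_const, L0, L1, L2, L3, L4, L5, L6, L7, L8] <;>
    simp [T2, T1]

set_option maxHeartbeats 2000000 in
lemma cl2 : ∀ X ∈ gens b c, ∀ Y ∈ T2 b c, lieB X Y ∈ T3 b c := by
  intro X hX Y hY
  simp only [gens, Set.mem_insert_iff, Set.mem_singleton_iff] at hX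
  simp only [T2, T1, Set.mem_union, Set.mem_insert_iff, Set.mem_singleton_iff] at hY
  rcases hX with rfl | rfl | rfl <;>
    rcases hY with
      ((rfl | rfl | rfl | rfl | rfl | rfl | rfl | rfl) | rfl | rfl | rfl | rfl) <;>
    simp only [lieB_self, lieB_const_const, L0, L1, L2, L3, L4, L5, L6, L7, L8, L9,
      L10, L11, L12, L11n, L12n, L13, L14] <;>
    simp [T3, T2, T1]

lemma sub1 : SmallSet b c 1 ⊆ T1 b c := by
  intro W hW
  rcases hW with hW | ⟨X, hX, Y, hY, rfl⟩
  · rcases hW with rfl | hW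
    · simp [T1]
    · rcases hW with rfl | rfl <;> simp [T1]
  · exact cl0 b c X hX Y hY

lemma T1sub2 : T1 b c ⊆ T2 b c := Set.subset_union_left
lemma T2sub3 : T2 b c ⊆ T3 b c := Set.subset_union_left

lemma sub2 : SmallSet b c 2 ⊆ T2 b c := by
  intro W hW
  rcases hW with hW | ⟨X, hX, Y, hY, rfl⟩
  · exact T1sub2 b c (sub1 b c hW)
  · exact cl1 b c X hX Y (sub1 b c hY)

lemma sub3 : SmallSet b c 3 ⊆ T3 b c := by
  intro W hW
  rcases hW with hW | ⟨X, hX, Y, hY, rfl⟩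
  · exact T2sub3 b c (sub2 b c hW)
  · exact cl2 b c X hX Y (sub2 b c hY)

end EKR121

namespace EKR121

variable (b c : ℝ)

lemma hgZ : Zone b c ∈ gens b c := Set.mem_insert _ _
lemma hg7 : (fun _ => Pi.single 7 1 : E9 → E9) ∈ gens b c := by
  right; exact Set.mem_insert _ _
lemma hg8 : (fun _ => Pi.single 8 1 : E9 → E9) ∈ gens b c := by
  right; right; rfl

lemma sm_mono {W : E9 → E9} {k : ℕ} (h : W ∈ SmallSet b c k) :
    W ∈ SmallSet b c (k + 1) := Set.mem_union_left _ h

lemma gens_sub : ∀ k, gens b c ⊆ SmallSet b c k := by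
  intro k
  induction k with
  | zero => exact fun _ h => h
  | succ k ih => exact fun W h => sm_mono b c (ih h)

lemma step_mem {X Y : E9 → E9} {k : ℕ} (hX : X ∈ gens b c) (hY : Y ∈ SmallSet b c k) :
    lieB X Y ∈ SmallSet b c (k + 1) :=
  Set.mem_union_right _ ⟨X, hX, Y, hY, rfl⟩

lemma s1_n5 : (fun _ => -Pi.single 5 1 : E9 → E9) ∈ SmallSet b c 1 := by
  have h := step_mem b c (hgZ b c) (gens_sub b c 0 (hg7 b c))
  rwa [L1] at h

lemma s1_p5 : (fun _ => Pi.single 5 1 : E9 → E9) ∈ SmallSet b c 1 := by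
  have h := step_mem b c (hg7 b c) (gens_sub b c 0 (hgZ b c))
  rwa [L3] at h

lemma s1_n6 : (fun _ => -Pi.single 6 1 : E9 → E9) ∈ SmallSet b c 1 := by
  have h := step_mem b c (hgZ b c) (gens_sub b c 0 (hg8 b c))
  rwa [L2] at h

lemma s1_p6 : (fun _ => Pi.single 6 1 : E9 → E9) ∈ SmallSet b c 1 := by
  have h := step_mem b c (hg8 b c) (gens_sub b c 0 (hgZ b c))
  rwa [L4] at h

lemma s2_VA : VA ∈ SmallSet b c 2 := by
  have h := step_mem b c (hgZ b c) (s1_n5 b c)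
  rwa [L6] at h

lemma s2_p4 : (fun _ => Pi.single 4 1 : E9 → E9) ∈ SmallSet b c 2 := by
  have h := step_mem b c (hgZ b c) (s1_n6 b c)
  rwa [L8] at h

lemma s3_VC : VC ∈ SmallSet b c 3 := by
  have h := step_mem b c (hgZ b c) (s2_VA b c)
  rwa [L9] at h

lemma s3_VF : VF ∈ SmallSet b c 3 := by
  have h := step_mem b c (hgZ b c) (s2_p4 b c)
  rwa [L13] at h

lemma s4_G : lieB (Zone b c) VC ∈ SmallSet b c 4 :=
  step_mem b c (hgZ b c) (s3_VC b c)

lemma s4_H : lieB (Zone b c) VF ∈ SmallSet b c 4 :=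
  step_mem b c (hgZ b c) (s3_VF b c)

lemma memF {W : E9 → E9} {k : ℕ} (h : W ∈ SmallSet b c k) :
    W 0 ∈ smallFiber b c k := Submodule.subset_span ⟨W, h, rfl⟩

noncomputable def bv (i : Fin 9) : E9 := Pi.single i 1

lemma li_bv : LinearIndependent ℝ bv := by
  have h := (Pi.basisFun ℝ (Fin 9)).linearIndependent
  have e : ⇑(Pi.basisFun ℝ (Fin 9)) = bv := funext fun i => by simp [bv]
  rwa [e] at h

lemma span_bv : Submodule.span ℝ (Set.range bv) = ⊤ := by
  have h := (Pi.basisFun ℝ (Fin 9)).span_eq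
  have e : ⇑(Pi.basisFun ℝ (Fin 9)) = bv := funext fun i => by simp [bv]
  rwa [e] at h

noncomputable def fam0 : Fin 3 → E9 :=
  ![(Pi.single 3 1 : E9) + b • (Pi.single 5 1 : E9) + c • (Pi.single 6 1 : E9),
    bv 7, bv 8]

noncomputable def fam1 : Fin 5 → E9 := bv ∘ ![3, 5, 6, 7, 8]
noncomputable def fam2 : Fin 7 → E9 := bv ∘ ![0, 3, 4, 5, 6, 7, 8]
noncomputable def fam3 : Fin 8 → E9 := bv ∘ ![0, 1, 3, 4, 5, 6, 7, 8]

lemma li_fam1 : LinearIndependent ℝ fam1 := li_bv.comp _ (by decide)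
lemma li_fam2 : LinearIndependent ℝ fam2 := li_bv.comp _ (by decide)
lemma li_fam3 : LinearIndependent ℝ fam3 := li_bv.comp _ (by decide)

lemma li_fam0 : LinearIndependent ℝ (fam0 b c) := by
  rw [Fintype.linearIndependent_iff]
  intro g hg
  have h3 := congrFun hg (3 : Fin 9)
  have h7 := congrFun hg (7 : Fin 9)
  have h8 := congrFun hg (8 : Fin 9)
  simp [fam0, bv, Fin.sum_univ_three, Pi.single_apply] at h3 h7 h8
  intro i
  fin_cases i <;> simp_all

end EKR121

namespace EKR121

variable (b c : ℝ)

lemma fiber0 : smallFiber b c 0 = Submodule.span ℝ (Set.range (fam0 b c)) := by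
  apply le_antisymm
  · apply Submodule.span_le.2
    rintro w ⟨W, hW, rfl⟩
    beta_reduce
    rcases hW with rfl | hW
    · rw [Zone_zero]
      exact Submodule.subset_span ⟨0, rfl⟩
    · rcases hW with rfl | rfl
      · exact Submodule.subset_span ⟨1, rfl⟩
      · exact Submodule.subset_span ⟨2, rfl⟩
  · apply Submodule.span_le.2
    rintro w ⟨j, rfl⟩
    fin_cases j
    · have h := memF b c (gens_sub b c 0 (hgZ b c))
      rw [Zone_zero] at h
      exact h
    · exact memF b c (gens_sub b c 0 (hg7 b c))
    · exact memF b c (gens_sub b c 0 (hg8 b c))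

lemma fiber1 : smallFiber b c 1 = Submodule.span ℝ (Set.range fam1) := by
  apply le_antisymm
  · apply Submodule.span_le.2
    rintro w ⟨W, hW, rfl⟩
    beta_reduce
    have hT := sub1 b c hW
    simp only [T1, Set.mem_insert_iff, Set.mem_singleton_iff] at hT
    rcases hT with rfl | rfl | rfl | rfl | rfl | rfl | rfl | rfl
    · rw [Zone_zero]
      refine add_mem (add_mem ?_ ?_) ?_
      · exact Submodule.subset_span ⟨0, rfl⟩
      · exact Submodule.smul_mem _ b (Submodule.subset_span ⟨1, rfl⟩)
      · exact Submodule.smul_mem _ c (Submodule.subset_span ⟨2, rfl⟩)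
    · exact Submodule.subset_span ⟨3, rfl⟩
    · exact Submodule.subset_span ⟨4, rfl⟩
    · exact Submodule.zero_mem _
    · exact Submodule.subset_span ⟨1, rfl⟩
    · exact neg_mem (Submodule.subset_span ⟨1, rfl⟩)
    · exact Submodule.subset_span ⟨2, rfl⟩
    · exact neg_mem (Submodule.subset_span ⟨2, rfl⟩)
  · apply Submodule.span_le.2
    rintro w ⟨j, rfl⟩
    have hu := memF b c (gens_sub b c 1 (hgZ b c))
    rw [Zone_zero] at hu
    have h5 := memF b c (s1_p5 b c)
    have h6 := memF b c (s1_p6 b c)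
    fin_cases j
    · have key : (bv 3 : E9) =
          ((Pi.single 3 1 : E9) + b • (Pi.single 5 1 : E9) + c • (Pi.single 6 1 : E9))
            - b • (Pi.single 5 1 : E9) - c • (Pi.single 6 1 : E9) := by
        simp only [bv]; module
      show (bv 3 : E9) ∈ smallFiber b c 1
      rw [key]
      exact sub_mem (sub_mem hu (Submodule.smul_mem _ b h5)) (Submodule.smul_mem _ c h6)
    · exact h5
    · exact h6
    · exact memF b c (gens_sub b c 1 (hg7 b c))
    · exact memF b c (gens_sub b c 1 (hg8 b c))

lemma fiber2 : smallFiber b c 2 = Submodule.span ℝ (Set.range fam2) := by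
  apply le_antisymm
  · apply Submodule.span_le.2
    rintro w ⟨W, hW, rfl⟩
    beta_reduce
    have hT := sub2 b c hW
    simp only [T2, T1, Set.mem_union, Set.mem_insert_iff, Set.mem_singleton_iff] at hT
    rcases hT with
      ((rfl | rfl | rfl | rfl | rfl | rfl | rfl | rfl) | rfl | rfl | rfl | rfl)
    · rw [Zone_zero]
      refine add_mem (add_mem ?_ ?_) ?_
      · exact Submodule.subset_span ⟨1, rfl⟩
      · exact Submodule.smul_mem _ b (Submodule.subset_span ⟨3, rfl⟩)
      · exact Submodule.smul_mem _ c (Submodule.subset_span ⟨4, rfl⟩)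
    · exact Submodule.subset_span ⟨5, rfl⟩
    · exact Submodule.subset_span ⟨6, rfl⟩
    · exact Submodule.zero_mem _
    · exact Submodule.subset_span ⟨3, rfl⟩
    · exact neg_mem (Submodule.subset_span ⟨3, rfl⟩)
    · exact Submodule.subset_span ⟨4, rfl⟩
    · exact neg_mem (Submodule.subset_span ⟨4, rfl⟩)
    · rw [VA_zero]
      exact Submodule.subset_span ⟨0, rfl⟩
    · have h : VA 0 ∈ Submodule.span ℝ (Set.range fam2) := by
        rw [VA_zero]; exact Submodule.subset_span ⟨0, rfl⟩
      exact neg_mem h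
    · exact Submodule.subset_span ⟨2, rfl⟩
    · exact neg_mem (Submodule.subset_span ⟨2, rfl⟩)
  · apply Submodule.span_le.2
    rintro w ⟨j, rfl⟩
    have hu := memF b c (gens_sub b c 2 (hgZ b c))
    rw [Zone_zero] at hu
    have h5 := memF b c (sm_mono b c (s1_p5 b c))
    have h6 := memF b c (sm_mono b c (s1_p6 b c))
    fin_cases j
    · have h := memF b c (s2_VA b c)
      rw [VA_zero] at h
      exact h
    · have key : (bv 3 : E9) =
          ((Pi.single 3 1 : E9) + b • (Pi.single 5 1 : E9) + c • (Pi.single 6 1 : E9))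
            - b • (Pi.single 5 1 : E9) - c • (Pi.single 6 1 : E9) := by
        simp only [bv]; module
      show (bv 3 : E9) ∈ smallFiber b c 2
      rw [key]
      exact sub_mem (sub_mem hu (Submodule.smul_mem _ b h5)) (Submodule.smul_mem _ c h6)
    · exact memF b c (s2_p4 b c)
    · exact h5
    · exact h6
    · exact memF b c (gens_sub b c 2 (hg7 b c))
    · exact memF b c (gens_sub b c 2 (hg8 b c))

lemma fiber3 : smallFiber b c 3 = Submodule.span ℝ (Set.range fam3) := by
  apply le_antisymm
  · apply Submodule.span_le.2
    rintro w ⟨W, hW, rfl⟩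
    beta_reduce
    have hT := sub3 b c hW
    simp only [T3, T2, T1, Set.mem_union, Set.mem_insert_iff, Set.mem_singleton_iff] at hT
    rcases hT with
      (((rfl | rfl | rfl | rfl | rfl | rfl | rfl | rfl) | rfl | rfl | rfl | rfl)
        | rfl | rfl | rfl | rfl)
    · rw [Zone_zero]
      refine add_mem (add_mem ?_ ?_) ?_
      · exact Submodule.subset_span ⟨2, rfl⟩
      · exact Submodule.smul_mem _ b (Submodule.subset_span ⟨4, rfl⟩)
      · exact Submodule.smul_mem _ c (Submodule.subset_span ⟨5, rfl⟩)
    · exact Submodule.subset_span ⟨6, rfl⟩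
    · exact Submodule.subset_span ⟨7, rfl⟩
    · exact Submodule.zero_mem _
    · exact Submodule.subset_span ⟨4, rfl⟩
    · exact neg_mem (Submodule.subset_span ⟨4, rfl⟩)
    · exact Submodule.subset_span ⟨5, rfl⟩
    · exact neg_mem (Submodule.subset_span ⟨5, rfl⟩)
    · rw [VA_zero]
      exact Submodule.subset_span ⟨0, rfl⟩
    · have h : VA 0 ∈ Submodule.span ℝ (Set.range fam3) := by
        rw [VA_zero]; exact Submodule.subset_span ⟨0, rfl⟩
      exact neg_mem h
    · exact Submodule.subset_span ⟨3, rfl⟩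
    · exact neg_mem (Submodule.subset_span ⟨3, rfl⟩)
    · rw [VC_zero]
      exact Submodule.subset_span ⟨1, rfl⟩
    · have h : VC 0 ∈ Submodule.span ℝ (Set.range fam3) := by
        rw [VC_zero]; exact Submodule.subset_span ⟨1, rfl⟩
      exact neg_mem h
    · rw [VF_zero]
      exact Submodule.zero_mem _
    · have h : VF 0 ∈ Submodule.span ℝ (Set.range fam3) := by
        rw [VF_zero]; exact Submodule.zero_mem _
      exact neg_mem h
  · apply Submodule.span_le.2
    rintro w ⟨j, rfl⟩
    have hu := memF b c (gens_sub b c 3 (hgZ b c))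
    rw [Zone_zero] at hu
    have h5 := memF b c (sm_mono b c (sm_mono b c (s1_p5 b c)))
    have h6 := memF b c (sm_mono b c (sm_mono b c (s1_p6 b c)))
    fin_cases j
    · have h := memF b c (sm_mono b c (s2_VA b c))
      rw [VA_zero] at h
      exact h
    · have h := memF b c (s3_VC b c)
      rw [VC_zero] at h
      exact h
    · have key : (bv 3 : E9) =
          ((Pi.single 3 1 : E9) + b • (Pi.single 5 1 : E9) + c • (Pi.single 6 1 : E9))
            - b • (Pi.single 5 1 : E9) - c • (Pi.single 6 1 : E9) := by
        simp only [bv]; module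
      show (bv 3 : E9) ∈ smallFiber b c 3
      rw [key]
      exact sub_mem (sub_mem hu (Submodule.smul_mem _ b h5)) (Submodule.smul_mem _ c h6)
    · exact memF b c (sm_mono b c (s2_p4 b c))
    · exact h5
    · exact h6
    · exact memF b c (gens_sub b c 3 (hg7 b c))
    · exact memF b c (gens_sub b c 3 (hg8 b c))

lemma fiber4 (hbc : (b, c) ≠ (0, 0)) : smallFiber b c 4 = ⊤ := by
  refine le_antisymm le_top ?_
  have hor : b ≠ 0 ∨ c ≠ 0 := by
    by_contra h
    push_neg at h
    exact hbc (by rw [h.1, h.2])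
  have hbv : ∀ i : Fin 9, bv i ∈ smallFiber b c 4 := by
    have hu := memF b c (gens_sub b c 4 (hgZ b c))
    rw [Zone_zero] at hu
    have h5 := memF b c (sm_mono b c (sm_mono b c (sm_mono b c (s1_p5 b c))))
    have h6 := memF b c (sm_mono b c (sm_mono b c (sm_mono b c (s1_p6 b c))))
    intro i
    fin_cases i
    · have h := memF b c (sm_mono b c (sm_mono b c (s2_VA b c)))
      rw [VA_zero] at h
      exact h
    · have h := memF b c (sm_mono b c (s3_VC b c))
      rw [VC_zero] at h
      exact h
    · rcases hor with hb | hc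
      · have h := memF b c (s4_H b c)
        rw [H0] at h
        have h2 := Submodule.smul_mem _ (-b)⁻¹ h
        rw [smul_smul, inv_mul_cancel₀ (neg_ne_zero.2 hb), one_smul] at h2
        exact h2
      · have h := memF b c (s4_G b c)
        rw [G0] at h
        have h2 := Submodule.smul_mem _ c⁻¹ h
        rw [smul_smul, inv_mul_cancel₀ hc, one_smul] at h2
        exact h2
    · have key : (bv 3 : E9) =
          ((Pi.single 3 1 : E9) + b • (Pi.single 5 1 : E9) + c • (Pi.single 6 1 : E9))
            - b • (Pi.single 5 1 : E9) - c • (Pi.single 6 1 : E9) := by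
        simp only [bv]; module
      show (bv 3 : E9) ∈ smallFiber b c 4
      rw [key]
      exact sub_mem (sub_mem hu (Submodule.smul_mem _ b h5)) (Submodule.smul_mem _ c h6)
    · exact memF b c (sm_mono b c (sm_mono b c (s2_p4 b c)))
    · exact h5
    · exact h6
    · exact memF b c (gens_sub b c 4 (hg7 b c))
    · exact memF b c (gens_sub b c 4 (hg8 b c))
  rw [← span_bv]
  apply Submodule.span_le.2
  rintro w ⟨i, rfl⟩
  exact hbv i

end EKR121

open EKR121

/-- For `(b,c) ≠ (0,0)`, the small growth vector at the origin of the
distribution spanned by Z₁, ∂_{x₄}, ∂_{y₄} is [3, 5, 7, 8, 9]. -/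
theorem small_growth_vector_121 (b c : ℝ) (hbc : (b, c) ≠ (0, 0)) :
    Module.finrank ℝ (smallFiber b c 0) = 3 ∧
    Module.finrank ℝ (smallFiber b c 1) = 5 ∧
    Module.finrank ℝ (smallFiber b c 2) = 7 ∧
    Module.finrank ℝ (smallFiber b c 3) = 8 ∧
    Module.finrank ℝ (smallFiber b c 4) = 9 := by
  refine ⟨?_, ?_, ?_, ?_, ?_⟩
  · rw [fiber0, finrank_span_eq_card (li_fam0 b c), Fintype.card_fin]
  · rw [fiber1, finrank_span_eq_card li_fam1, Fintype.card_fin]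
  · rw [fiber2, finrank_span_eq_card li_fam2, Fintype.card_fin]
  · rw [fiber3, finrank_span_eq_card li_fam3, Fintype.card_fin]
  · rw [fiber4 b c hbc, finrank_top, Module.finrank_pi, Fintype.card_fin]
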